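/- Let X ∈ ℝ^{N×D} have full column rank D, Y ∈ ℝ^{N×C}, and 1 ≤ K ≤ D, and let Ŷ := X(XᵀX)⁻¹XᵀY be the OLS prediction of Y from X. Then the minimum of ‖XVW − Y‖_F² over all V ∈ ℝ^{D×K} and W ∈ ℝ^{K×C} is attained and equals ‖Y‖_F² − (λ_1(ŶᵀŶ) + … + λ_K(ŶᵀŶ)), the squared Frobenius norm of Y minus the sum of the K largest eigenvalues of ŶᵀŶ. -/

import Mathlib

open Matrix BigOperators Finset RealInnerProductSpace

noncomputable section

/-- Squared Frobenius norm of a real matrix. -/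
def frobSq {m n : Type*} [Fintype m] [Fintype n] (M : Matrix m n ℝ) : ℝ :=
  ∑ i, ∑ j, (M i j) ^ 2

/-- `AᵀA` is Hermitian over `ℝ`. -/
theorem isHermitian_tmul {m n : ℕ} (A : Matrix (Fin m) (Fin n) ℝ) :
    (Aᵀ * A).IsHermitian := by
  simpa [Matrix.conjTranspose_eq_transpose_of_trivial] using
    Matrix.isHermitian_conjTranspose_mul_self A

/-- `AAᵀ` is Hermitian over `ℝ`. -/
theorem isHermitian_mult {m n : ℕ} (A : Matrix (Fin m) (Fin n) ℝ) :
    (A * Aᵀ).IsHermitian := by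
  simpa [Matrix.conjTranspose_eq_transpose_of_trivial] using
    Matrix.isHermitian_mul_conjTranspose_self A

/-- The `i`-th eigenvalue of a real symmetric (Hermitian) matrix, in decreasing order
(`eigDesc hM 0` is the largest eigenvalue, counted with multiplicity). -/
def eigDesc {n : ℕ} {M : Matrix (Fin n) (Fin n) ℝ} (hM : M.IsHermitian) (i : Fin n) : ℝ :=
  hM.eigenvalues (Tuple.sort hM.eigenvalues i.rev)

/-- Sum of the `K` largest eigenvalues of a Hermitian matrix. -/
def sumTopEig {n : ℕ} {M : Matrix (Fin n) (Fin n) ℝ} (hM : M.IsHermitian) (K : ℕ) : ℝ :=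
  ∑ i : Fin n, if (i : ℕ) < K then eigDesc hM i else 0

/-- Sum of the eigenvalues of a Hermitian matrix after the `K` largest ones. -/
def sumTailEig {n : ℕ} {M : Matrix (Fin n) (Fin n) ℝ} (hM : M.IsHermitian) (K : ℕ) : ℝ :=
  ∑ i : Fin n, if K ≤ (i : ℕ) then eigDesc hM i else 0

/-- Top-`K` eigenspace of a Hermitian matrix: the sum of the eigenspaces associated with
its `K` largest eigenvalues. -/
def topEigSpace {n : ℕ} {M : Matrix (Fin n) (Fin n) ℝ} (hM : M.IsHermitian) (K : ℕ) :
    Submodule ℝ (Fin n → ℝ) :=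
  ⨆ i : {i : Fin n // (i : ℕ) < K},
    LinearMap.ker (M.mulVecLin - eigDesc hM i.1 • LinearMap.id)

/-- Ordinary least squares prediction of `Y` from `X`. -/
def ols {N D C : ℕ} (X : Matrix (Fin N) (Fin D) ℝ) (Y : Matrix (Fin N) (Fin C) ℝ) :
    Matrix (Fin N) (Fin C) ℝ :=
  X * (Xᵀ * X)⁻¹ * Xᵀ * Y

lemma frobSq_eq_trace {m n : Type*} [Fintype m] [Fintype n] (M : Matrix m n ℝ) :
    frobSq M = (Mᵀ * M).trace := by
  simp only [frobSq, Matrix.trace, Matrix.diag, Matrix.mul_apply, Matrix.transpose_apply, pow_two]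
  exact Finset.sum_comm

lemma frobSq_pyth {N C : Type*} [Fintype N] [Fintype C] (B E : Matrix N C ℝ)
    (h : Bᵀ * E = 0) : frobSq (B + E) = frobSq B + frobSq E := by
  have key : ∑ i, ∑ j, B i j * E i j = 0 := by
    rw [Finset.sum_comm]
    calc ∑ j, ∑ i, B i j * E i j = ∑ j, (Bᵀ * E) j j := by
          simp [Matrix.mul_apply]
      _ = 0 := by simp [h]
  have expand : frobSq (B + E) = frobSq B + frobSq E + 2 * ∑ i, ∑ j, B i j * E i j := by
    simp only [frobSq, Matrix.add_apply, Finset.mul_sum, ← Finset.sum_add_distrib]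
    exact Finset.sum_congr rfl fun i _ => Finset.sum_congr rfl fun j _ => by ring
  rw [expand, key]; ring

lemma frobSq_neg {N C : Type*} [Fintype N] [Fintype C] (M : Matrix N C ℝ) :
    frobSq (-M) = frobSq M := by
  simp [frobSq]

lemma isUnit_det_tmul {N D : ℕ} (X : Matrix (Fin N) (Fin D) ℝ) (hrank : X.rank = D) :
    IsUnit (Xᵀ * X).det := by
  have h1 : (Xᵀ * X).rank = D := by rw [Matrix.rank_transpose_mul_self, hrank]
  have h2 : LinearMap.ker (Xᵀ * X).mulVecLin = ⊥ := by
    have := LinearMap.finrank_range_add_finrank_ker (Xᵀ * X).mulVecLin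
    rw [show Module.finrank ℝ (LinearMap.range (Xᵀ * X).mulVecLin) = D from h1] at this
    simp only [Module.finrank_fintype_fun_eq_card, Fintype.card_fin] at this
    have hk : Module.finrank ℝ (LinearMap.ker (Xᵀ * X).mulVecLin) = 0 := by omega
    exact Submodule.finrank_eq_zero.mp hk
  have hinj : Function.Injective ((Xᵀ * X).mulVec) := by
    have := LinearMap.ker_eq_bot.mp h2
    exact this
  rw [← Matrix.isUnit_iff_isUnit_det]
  exact Matrix.mulVec_injective_iff_isUnit.mp hinj

lemma sum_range_cut (a b : ℕ) (f : ℕ → ℝ) (hf : ∀ n, b ≤ n → f n = 0) :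
    ∑ n ∈ Finset.range a, f n = ∑ n ∈ Finset.range (min a b), f n := by
  apply (Finset.sum_subset (Finset.range_subset_range.mpr (min_le_left a b)) ?_).symm
  intro n hn hn'
  simp only [Finset.mem_range, lt_min_iff, not_and, not_lt] at hn hn'
  exact hf n (hn' hn)

noncomputable def descPerm {n : ℕ} {M : Matrix (Fin n) (Fin n) ℝ} (hM : M.IsHermitian) : Equiv.Perm (Fin n) :=
  (Fin.revPerm : Equiv.Perm (Fin n)).trans (Tuple.sort hM.eigenvalues)

lemma eigDesc_eq {n : ℕ} {M : Matrix (Fin n) (Fin n) ℝ} (hM : M.IsHermitian) (i : Fin n) :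
    eigDesc hM i = hM.eigenvalues (descPerm hM i) := rfl

lemma eigDesc_antitone {n : ℕ} {M : Matrix (Fin n) (Fin n) ℝ} (hM : M.IsHermitian) :
    Antitone (eigDesc hM) := by
  intro i j hij
  exact Tuple.monotone_sort hM.eigenvalues (Fin.rev_le_rev.mpr hij)

lemma sortedSum {C K : ℕ} (lam t : Fin C → ℝ) (hmono : Antitone lam)
    (hnn : ∀ i, 0 ≤ lam i) (ht0 : ∀ i, 0 ≤ t i) (ht1 : ∀ i, t i ≤ 1)
    (hsum : ∑ i, t i ≤ K) :
    ∑ i, lam i * t i ≤ ∑ i : Fin C, if (i : ℕ) < K then lam i else 0 := by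
  by_cases hKC : C ≤ K
  · have : ∀ i : Fin C, (if ((i : ℕ) < K) then lam i else 0) = lam i := by
      intro i; rw [if_pos (lt_of_lt_of_le i.isLt hKC)]
    rw [Finset.sum_congr rfl (fun i _ => this i)]
    apply Finset.sum_le_sum
    intro i _
    nlinarith [hnn i, ht0 i, ht1 i]
  · push_neg at hKC
    set k : Fin C := ⟨K, hKC⟩ with hk
    have hcard : ∑ i : Fin C, (if (i : ℕ) < K then (1 : ℝ) else 0) = K := by
      rw [Fin.sum_univ_eq_sum_range (fun n => if n < K then (1 : ℝ) else 0) C]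
      have hfil : Finset.filter (fun n => n < K) (Finset.range C) = Finset.range K := by
        ext n; simp only [Finset.mem_filter, Finset.mem_range]; omega
      rw [Finset.sum_boole, hfil, Finset.card_range]
    have key : ∀ i : Fin C, lam i * t i - (if (i : ℕ) < K then lam i else 0)
        ≤ lam k * t i - lam k * (if (i : ℕ) < K then (1:ℝ) else 0) := by
      intro i
      by_cases h : (i : ℕ) < K
      · rw [if_pos h, if_pos h]
        have hik : i ≤ k := by rw [hk]; exact Fin.le_def.mpr (le_of_lt h)
        have : lam k ≤ lam i := hmono hik
        nlinarith [ht1 i]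
      · rw [if_neg h, if_neg h]
        have hki : k ≤ i := by rw [hk]; exact Fin.le_def.mpr (le_of_not_gt h)
        have : lam i ≤ lam k := hmono hki
        nlinarith [ht0 i]
    have h2 : ∑ i, (lam i * t i - (if (i : ℕ) < K then lam i else 0))
        ≤ lam k * (∑ i, t i) - lam k * K := by
      rw [← hcard, Finset.mul_sum, Finset.mul_sum, ← Finset.sum_sub_distrib]
      exact Finset.sum_le_sum fun i _ => key i
    rw [Finset.sum_sub_distrib] at h2
    have h3 : lam k * (∑ i, t i) - lam k * K ≤ 0 := by
      have := hnn k
      nlinarith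
    linarith

lemma sum_sq_rows {n C : ℕ} (A : Matrix (Fin n) (Fin C) ℝ) (v : Fin C → ℝ) :
    ∑ i, (∑ c, v c * A i c) ^ 2 = ((Aᵀ * A) *ᵥ v) ⬝ᵥ v := by
  simp only [dotProduct, Matrix.mulVec, Matrix.mul_apply, Matrix.transpose_apply, pow_two,
    dotProduct, Finset.sum_mul, Finset.mul_sum]
  rw [Finset.sum_comm]
  refine Finset.sum_congr rfl fun c _ => ?_
  rw [Finset.sum_comm]
  refine Finset.sum_congr rfl fun c' _ => ?_
  refine Finset.sum_congr rfl fun i _ => by ring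

lemma quad_eig {n C : ℕ} (A : Matrix (Fin n) (Fin C) ℝ) (w : EuclideanSpace ℝ (Fin C)) :
    ((Aᵀ * A) *ᵥ w) ⬝ᵥ w
      = ∑ p, (isHermitian_tmul A).eigenvalues p
          * ⟪(isHermitian_tmul A).eigenvectorBasis p, w⟫ ^ 2 := by
  set S := Aᵀ * A with hSdef
  have hS := isHermitian_tmul A
  have hsym : Sᵀ = S := by rw [hSdef, Matrix.transpose_mul, Matrix.transpose_transpose]
  have hdot : ∀ x y : EuclideanSpace ℝ (Fin C), ⟪x, y⟫ = x ⬝ᵥ (y : Fin C → ℝ) := by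
    intro x y
    simp [PiLp.inner_apply, RCLike.inner_apply, dotProduct, mul_comm]
  have key : ∀ p, ⟪hS.eigenvectorBasis p, (WithLp.toLp 2 (S *ᵥ w) : EuclideanSpace ℝ (Fin C))⟫
      = hS.eigenvalues p * ⟪hS.eigenvectorBasis p, w⟫ := by
    intro p
    rw [hdot, hdot, WithLp.ofLp_toLp]
    rw [show ((hS.eigenvectorBasis p : EuclideanSpace ℝ (Fin C)) : Fin C → ℝ) ⬝ᵥ (S *ᵥ w)
        = (S *ᵥ (hS.eigenvectorBasis p : EuclideanSpace ℝ (Fin C)) : Fin C → ℝ) ⬝ᵥ w by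
      rw [Matrix.dotProduct_mulVec, ← hsym, Matrix.vecMul_transpose, hsym]]
    rw [show (S *ᵥ (hS.eigenvectorBasis p : EuclideanSpace ℝ (Fin C)) : Fin C → ℝ)
        = hS.eigenvalues p • ((hS.eigenvectorBasis p : EuclideanSpace ℝ (Fin C)) : Fin C → ℝ)
      from hS.mulVec_eigenvectorBasis p]
    rw [smul_dotProduct]
    rfl
  have parseval := (hS.eigenvectorBasis).sum_inner_mul_inner w (WithLp.toLp 2 (S *ᵥ w) : EuclideanSpace ℝ (Fin C))
  have lhs : (S *ᵥ w) ⬝ᵥ w = ⟪w, (WithLp.toLp 2 (S *ᵥ w) : EuclideanSpace ℝ (Fin C))⟫ := by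
    rw [hdot]; simp [dotProduct, mul_comm]
  rw [lhs, ← parseval]
  refine Finset.sum_congr rfl fun p _ => ?_
  rw [key p, real_inner_comm w]
  ring

lemma kyFan {n C K r : ℕ} (A : Matrix (Fin n) (Fin C) ℝ) (hr : r ≤ K)
    (v : Fin r → EuclideanSpace ℝ (Fin C)) (hv : Orthonormal ℝ v) :
    ∑ j : Fin r, ((Aᵀ * A) *ᵥ (v j)) ⬝ᵥ (v j) ≤ sumTopEig (isHermitian_tmul A) K := by
  have hS := isHermitian_tmul A
  set u := hS.eigenvectorBasis with hu
  set t : Fin C → ℝ := fun p => ∑ j, ⟪u p, v j⟫ ^ 2 with ht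
  have step1 : ∑ j : Fin r, ((Aᵀ * A) *ᵥ (v j)) ⬝ᵥ (v j)
      = ∑ p, hS.eigenvalues p * t p := by
    rw [Finset.sum_congr rfl fun j _ => quad_eig A (v j)]
    rw [Finset.sum_comm]
    refine Finset.sum_congr rfl fun p _ => ?_
    rw [ht, Finset.mul_sum]
  have ht0 : ∀ p, 0 ≤ t p := fun p => Finset.sum_nonneg fun j _ => sq_nonneg _
  have ht1 : ∀ p, t p ≤ 1 := by
    intro p
    have hb := hv.sum_inner_products_le (u p) (s := Finset.univ)
    have h1 : ‖(u p : EuclideanSpace ℝ (Fin C))‖ = 1 := hS.eigenvectorBasis.orthonormal.1 p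
    rw [ht]
    calc ∑ j, ⟪u p, v j⟫ ^ 2 = ∑ j, ‖⟪v j, (u p : EuclideanSpace ℝ (Fin C))⟫‖ ^ 2 := by
          refine Finset.sum_congr rfl fun j _ => ?_
          rw [real_inner_comm, Real.norm_eq_abs, sq_abs]
      _ ≤ ‖(u p : EuclideanSpace ℝ (Fin C))‖ ^ 2 := hb
      _ = 1 := by rw [h1]; norm_num
  have hsum : ∑ p, t p ≤ (K : ℝ) := by
    have heq : ∀ j, ∑ p, ⟪u p, v j⟫ ^ 2 = 1 := by
      intro j
      have hp := u.sum_inner_mul_inner (v j) (v j)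
      have hvj : ⟪v j, v j⟫ = (1:ℝ) := by
        have := hv.1 j
        rw [real_inner_self_eq_norm_sq, this]; norm_num
      rw [hvj] at hp
      rw [← hp]
      refine Finset.sum_congr rfl fun p _ => ?_
      rw [real_inner_comm (v j) (u p)]
      ring
    have : ∑ p, t p = ∑ j : Fin r, ∑ p, ⟪u p, v j⟫ ^ 2 := by
      rw [ht, Finset.sum_comm]
    rw [this, Finset.sum_congr rfl fun j _ => heq j, Finset.sum_const, Finset.card_univ,
      Fintype.card_fin, nsmul_eq_mul, mul_one]
    exact_mod_cast hr
  have hnn : ∀ p, 0 ≤ hS.eigenvalues p := by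
    intro p
    have hps := Matrix.posSemidef_conjTranspose_mul_self A
    rw [Matrix.conjTranspose_eq_transpose_of_trivial] at hps
    exact hps.eigenvalues_nonneg p
  rw [step1]
  have reidx : ∑ p, hS.eigenvalues p * t p
      = ∑ i, eigDesc hS i * t (descPerm hS i) := by
    rw [← Equiv.sum_comp (descPerm hS) (fun p => hS.eigenvalues p * t p)]
    exact Finset.sum_congr rfl fun i _ => by rw [eigDesc_eq]
  have reidx2 : ∑ p, t p = ∑ i, t (descPerm hS i) :=
    (Equiv.sum_comp (descPerm hS) t).symm
  rw [reidx]
  exact sortedSum (eigDesc hS) (fun i => t (descPerm hS i)) (eigDesc_antitone hS)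
    (fun i => hnn _) (fun i => ht0 _) (fun i => ht1 _) (by rw [← reidx2]; exact hsum)

lemma proj_bound {ι : Type*} [Fintype ι] {E' : Type*} [NormedAddCommGroup E']
    [InnerProductSpace ℝ E'] (v : ι → E') (hv : Orthonormal ℝ v) (a : E') (d : ι → ℝ) :
    ⟪a, a⟫ - ∑ j, ⟪v j, a⟫ ^ 2
      ≤ ⟪(∑ j, d j • v j) - a, (∑ j, d j • v j) - a⟫ := by
  classical
  set x := ∑ j, d j • v j with hx
  have hxa : ⟪x, a⟫ = ∑ j, d j * ⟪v j, a⟫ := by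
    rw [hx, sum_inner]
    exact Finset.sum_congr rfl fun j _ => real_inner_smul_left _ _ _
  have hxx : ⟪x, x⟫ = ∑ j, d j ^ 2 := by
    rw [hx, sum_inner]
    have : ∀ j, ⟪d j • v j, ∑ k, d k • v k⟫ = d j ^ 2 := by
      intro j
      rw [inner_sum]
      have : ∀ k, ⟪d j • v j, d k • v k⟫ = d j * d k * (if j = k then 1 else 0) := by
        intro k
        rw [real_inner_smul_left, real_inner_smul_right, orthonormal_iff_ite.mp hv j k]
        ring
      rw [Finset.sum_congr rfl fun k _ => this k]
      simp [mul_ite, Finset.sum_ite_eq']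
      ring
    rw [Finset.sum_congr rfl fun j _ => this j]
  have hexp : ⟪x - a, x - a⟫ = ⟪x, x⟫ - 2 * ⟪x, a⟫ + ⟪a, a⟫ := real_inner_sub_sub_self x a
  have hnn : (0:ℝ) ≤ ∑ j, (d j - ⟪v j, a⟫) ^ 2 :=
    Finset.sum_nonneg fun j _ => sq_nonneg _
  have hsq : ∑ j, (d j - ⟪v j, a⟫) ^ 2
      = ∑ j, d j ^ 2 - 2 * ∑ j, d j * ⟪v j, a⟫ + ∑ j, ⟪v j, a⟫ ^ 2 := by
    rw [Finset.mul_sum, ← Finset.sum_sub_distrib, ← Finset.sum_add_distrib]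
    exact Finset.sum_congr rfl fun j _ => by ring
  rw [hexp, hxx, hxa]
  linarith

lemma lowerB {n C K : ℕ} (A : Matrix (Fin n) (Fin C) ℝ)
    (B : Matrix (Fin n) (Fin K) ℝ) (W : Matrix (Fin K) (Fin C) ℝ) :
    frobSq A - sumTopEig (isHermitian_tmul A) K ≤ frobSq (B * W - A) := by
  classical
  set wr : Fin K → EuclideanSpace ℝ (Fin C) :=
    fun k => (WithLp.equiv 2 (Fin C → ℝ)).symm (W k) with hwr
  set F : Submodule ℝ (EuclideanSpace ℝ (Fin C)) := Submodule.span ℝ (Set.range wr) with hF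
  have hfin : Module.finrank ℝ F ≤ K := by
    refine le_trans (finrank_span_le_card _) ?_
    rw [Set.toFinset_card]
    exact le_trans (Fintype.card_range_le wr) (by simp)
  set b := stdOrthonormalBasis ℝ F with hb
  set v : Fin (Module.finrank ℝ F) → EuclideanSpace ℝ (Fin C) :=
    fun j => (b j : EuclideanSpace ℝ (Fin C)) with hv
  have hvon : Orthonormal ℝ v := b.orthonormal.comp_linearIsometry F.subtypeₗᵢ
  have inner_formula : ∀ (x y : EuclideanSpace ℝ (Fin C)), ⟪x, y⟫ = ∑ c, x c * y c := by
    intro x y; simp [PiLp.inner_apply, RCLike.inner_apply, mul_comm]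
  set arow : Fin n → EuclideanSpace ℝ (Fin C) :=
    fun i => (WithLp.equiv 2 (Fin C → ℝ)).symm (fun c => A i c) with harow
  set xrow : Fin n → EuclideanSpace ℝ (Fin C) :=
    fun i => (WithLp.equiv 2 (Fin C → ℝ)).symm (fun c => (B * W) i c) with hxrow
  have hxmem : ∀ i, xrow i ∈ F := by
    intro i
    have hxe : xrow i = ∑ k, B i k • wr k := by
      apply (WithLp.linearEquiv 2 ℝ (Fin C → ℝ)).injective
      rw [map_sum]
      funext c
      simp only [hxrow, hwr, _root_.map_smul, WithLp.linearEquiv_apply, WithLp.equiv_symm_apply,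
        Equiv.apply_symm_apply, Matrix.mul_apply, Finset.sum_apply, Pi.smul_apply, smul_eq_mul,
        PiLp.toLp_apply]
      rfl
    rw [hxe]
    exact Submodule.sum_mem F fun k _ =>
      Submodule.smul_mem F _ (Submodule.subset_span ⟨k, rfl⟩)
  -- expansion and per-row bound
  have hrow : ∀ i, ⟪arow i, arow i⟫ - ∑ j, ⟪v j, arow i⟫ ^ 2
      ≤ ⟪xrow i - arow i, xrow i - arow i⟫ := by
    intro i
    set xF : F := ⟨xrow i, hxmem i⟩ with hxF
    set d : Fin (Module.finrank ℝ F) → ℝ := fun j => b.repr xF j with hd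
    have hexp : ∑ j, d j • v j = xrow i := by
      have hre := b.sum_repr xF
      have hcoe : ((∑ j, b.repr xF j • b j : F) : EuclideanSpace ℝ (Fin C))
          = ∑ j, d j • v j := by
        rw [Submodule.coe_sum]
        exact Finset.sum_congr rfl fun j _ => by rw [hd, hv, SetLike.val_smul]
      rw [← hcoe, hre]
    have := proj_bound v hvon (arow i) d
    rwa [hexp] at this
  have hfr : frobSq (B * W - A) = ∑ i, ⟪xrow i - arow i, xrow i - arow i⟫ := by
    refine Finset.sum_congr rfl fun i _ => ?_
    rw [inner_formula]
    refine Finset.sum_congr rfl fun c _ => ?_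
    simp [hxrow, harow, Matrix.sub_apply, pow_two]
  have haf : frobSq A = ∑ i, ⟪arow i, arow i⟫ := by
    refine Finset.sum_congr rfl fun i _ => ?_
    rw [inner_formula]
    refine Finset.sum_congr rfl fun c _ => ?_
    simp [harow, pow_two]
  have hswap : ∑ i, ∑ j, ⟪v j, arow i⟫ ^ 2
      = ∑ j, ((Aᵀ * A) *ᵥ (v j)) ⬝ᵥ (v j) := by
    rw [Finset.sum_comm]
    refine Finset.sum_congr rfl fun j _ => ?_
    rw [← sum_sq_rows A (v j)]
    refine Finset.sum_congr rfl fun i _ => ?_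
    rw [inner_formula]
    simp [harow]
  have hky := kyFan A hfin v hvon
  have hsum_bound : ∑ i, (⟪arow i, arow i⟫ - ∑ j, ⟪v j, arow i⟫ ^ 2)
      ≤ ∑ i, ⟪xrow i - arow i, xrow i - arow i⟫ :=
    Finset.sum_le_sum fun i _ => hrow i
  rw [Finset.sum_sub_distrib] at hsum_bound
  rw [hfr]
  rw [hswap] at hsum_bound
  linarith [haf, hky]

lemma attainB {n C K : ℕ} (A : Matrix (Fin n) (Fin C) ℝ) :
    ∃ R : Matrix (Fin K) (Fin C) ℝ,
      frobSq (A * Rᵀ * R - A) = frobSq A - sumTopEig (isHermitian_tmul A) K := by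
  classical
  have hS := isHermitian_tmul A
  set uf : Fin C → (Fin C → ℝ) :=
    fun p => (WithLp.equiv 2 (Fin C → ℝ)) (hS.eigenvectorBasis p) with huf
  have horth : ∀ p q, ∑ j, uf p j * uf q j = if p = q then 1 else 0 := by
    intro p q
    have h0 := orthonormal_iff_ite.mp hS.eigenvectorBasis.orthonormal p q
    rw [← h0]
    simp [PiLp.inner_apply, RCLike.inner_apply, huf, mul_comm]
  have hmulu : ∀ p, (Aᵀ * A) *ᵥ uf p = hS.eigenvalues p • uf p := fun p =>
    hS.mulVec_eigenvectorBasis p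
  set π := descPerm hS with hπ
  set R : Matrix (Fin K) (Fin C) ℝ :=
    Matrix.of (fun i j => if h : (i : ℕ) < C then uf (π ⟨i, h⟩) j else 0) with hRdef
  refine ⟨R, ?_⟩
  have hRapp : ∀ (i : Fin K) (j : Fin C),
      R i j = if h : (i : ℕ) < C then uf (π ⟨i, h⟩) j else 0 := fun i j => rfl
  have hRRt : ∀ i i' : Fin K, (R * Rᵀ) i i' = if ((i : ℕ) < C ∧ i = i') then 1 else 0 := by
    intro i i'
    rw [Matrix.mul_apply]
    by_cases hi : (i : ℕ) < C
    · by_cases hi' : (i' : ℕ) < C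
      · have h1 : ∀ j, R i j * Rᵀ j i' = uf (π ⟨i, hi⟩) j * uf (π ⟨i', hi'⟩) j := by
          intro j; rw [Matrix.transpose_apply, hRapp, hRapp, dif_pos hi, dif_pos hi']
        rw [Finset.sum_congr rfl fun j _ => h1 j, horth]
        have h2 : (π ⟨(i:ℕ), hi⟩ = π ⟨(i':ℕ), hi'⟩) ↔ (i = i') := by
          rw [Equiv.apply_eq_iff_eq]
          constructor
          · intro h
            have hval := congrArg Fin.val h
            simp only [] at hval
            exact Fin.ext hval
          · intro h; subst h; rfl
        simp only [h2]
        simp [hi]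
      · have h1 : ∀ j, R i j * Rᵀ j i' = 0 := by
          intro j; rw [Matrix.transpose_apply, hRapp i', dif_neg hi', mul_zero]
        rw [Finset.sum_congr rfl fun j _ => h1 j, Finset.sum_const_zero]
        have h3 : ¬ ((i : ℕ) < C ∧ i = i') := by
          rintro ⟨hh1, rfl⟩; exact hi' hh1
        rw [if_neg h3]
    · have h1 : ∀ j, R i j * Rᵀ j i' = 0 := by
        intro j; rw [hRapp, dif_neg hi, zero_mul]
      rw [Finset.sum_congr rfl fun j _ => h1 j, Finset.sum_const_zero]
      rw [if_neg (by tauto)]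
  have hRRtR : R * Rᵀ * R = R := by
    ext i j
    rw [Matrix.mul_apply]
    have h1 : ∀ i', (R * Rᵀ) i i' * R i' j
        = (if i' = i then (if (i : ℕ) < C then R i j else 0) else 0) := by
      intro i'
      rw [hRRt]
      by_cases h : (i : ℕ) < C ∧ i = i'
      · obtain ⟨ha, rfl⟩ := h
        simp [ha]
      · rw [if_neg h]
        by_cases h2 : i' = i
        · subst h2
          have h3 : ¬ (i' : ℕ) < C := fun h3 => h ⟨h3, rfl⟩
          simp [h3]
        · simp [h2]
    rw [Finset.sum_congr rfl fun i' _ => h1 i', Finset.sum_ite_eq' Finset.univ i _]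
    simp only [Finset.mem_univ, if_true]
    by_cases h3 : (i : ℕ) < C
    · rw [if_pos h3]
    · rw [if_neg h3, hRapp, dif_neg h3]
  set Q := Rᵀ * R with hQ
  have hQsym : Qᵀ = Q := by rw [hQ, Matrix.transpose_mul, Matrix.transpose_transpose]
  have hQidem : Q * Q = Q := by
    rw [hQ]
    calc Rᵀ * R * (Rᵀ * R) = Rᵀ * (R * Rᵀ * R) := by simp only [Matrix.mul_assoc]
      _ = Rᵀ * R := by rw [hRRtR]
  have e1 : (A * Q - A)ᵀ = Q * Aᵀ - Aᵀ := by
    rw [Matrix.transpose_sub, Matrix.transpose_mul, hQsym]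
  have expand : (A * Q - A)ᵀ * (A * Q - A)
      = Q * (Aᵀ * (A * Q)) - Q * (Aᵀ * A) - Aᵀ * (A * Q) + Aᵀ * A := by
    rw [e1, Matrix.sub_mul, Matrix.mul_sub, Matrix.mul_sub]
    simp only [Matrix.mul_assoc]
    abel
  have t1 : (Q * (Aᵀ * (A * Q))).trace = ((Aᵀ * A) * Q).trace := by
    rw [show Aᵀ * (A * Q) = (Aᵀ * A) * Q from (Matrix.mul_assoc _ _ _).symm,
      Matrix.trace_mul_comm Q ((Aᵀ * A) * Q), Matrix.mul_assoc, hQidem]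
  have t2 : (Q * (Aᵀ * A)).trace = ((Aᵀ * A) * Q).trace := Matrix.trace_mul_comm _ _
  have t3 : (Aᵀ * (A * Q)).trace = ((Aᵀ * A) * Q).trace := by rw [Matrix.mul_assoc]
  set g : ℕ → ℝ := fun m => if h : m < C then hS.eigenvalues (π ⟨m, h⟩) else 0 with hgdef
  have hg : ∀ i : Fin K, (R * ((Aᵀ * A) * Rᵀ)) i i = g i := by
    intro i
    show ∑ j, R i j * ((Aᵀ * A) * Rᵀ) j i
      = if h : (i : ℕ) < C then hS.eigenvalues (π ⟨i, h⟩) else 0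
    by_cases hi : (i : ℕ) < C
    · rw [dif_pos hi]
      have hcol : ∀ c, ((Aᵀ * A) * Rᵀ) c i = ((Aᵀ * A) *ᵥ uf (π ⟨i, hi⟩)) c := by
        intro c
        rw [Matrix.mul_apply, Matrix.mulVec]
        refine Finset.sum_congr rfl fun c' _ => ?_
        rw [Matrix.transpose_apply, hRapp, dif_pos hi]
      have h1 : ∀ c, R i c * ((Aᵀ * A) * Rᵀ) c i
          = hS.eigenvalues (π ⟨i, hi⟩) * (uf (π ⟨i, hi⟩) c * uf (π ⟨i, hi⟩) c) := by
        intro c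
        rw [hcol, hmulu, hRapp, dif_pos hi, Pi.smul_apply, smul_eq_mul]
        ring
      rw [Finset.sum_congr rfl fun c _ => h1 c, ← Finset.mul_sum, horth, if_pos rfl, mul_one]
    · rw [dif_neg hi]
      have h1 : ∀ c, R i c * ((Aᵀ * A) * Rᵀ) c i = 0 := by
        intro c; rw [hRapp, dif_neg hi, zero_mul]
      rw [Finset.sum_congr rfl fun c _ => h1 c, Finset.sum_const_zero]
  have hgi : ∀ i : Fin C, g i = eigDesc hS i := by
    intro i
    show (if h : (i : ℕ) < C then hS.eigenvalues (π ⟨(i : ℕ), h⟩) else 0) = eigDesc hS i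
    rw [dif_pos i.isLt, eigDesc_eq]
  have htrace : ((Aᵀ * A) * Q).trace = sumTopEig hS K := by
    have step1 : ((Aᵀ * A) * Q).trace = (R * ((Aᵀ * A) * Rᵀ)).trace := by
      rw [hQ, show (Aᵀ * A) * (Rᵀ * R) = ((Aᵀ * A) * Rᵀ) * R from (Matrix.mul_assoc _ _ _).symm,
        Matrix.trace_mul_comm]
    have step2 : (R * ((Aᵀ * A) * Rᵀ)).trace = ∑ m ∈ Finset.range K, g m := by
      rw [Matrix.trace]
      rw [show ∑ i, (R * ((Aᵀ * A) * Rᵀ)).diag i = ∑ i : Fin K, g ↑i from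
        Finset.sum_congr rfl fun i _ => hg i]
      exact Fin.sum_univ_eq_sum_range g K
    have step3 : sumTopEig hS K
        = ∑ m ∈ Finset.range C, (if m < K then g m else 0) := by
      rw [sumTopEig,
        show (∑ i : Fin C, if (i:ℕ) < K then eigDesc hS i else 0)
          = ∑ i : Fin C, (fun m => if m < K then g m else 0) (i : ℕ) from
        Finset.sum_congr rfl fun i _ => by simp only [hgi]]
      exact Fin.sum_univ_eq_sum_range (fun m => if m < K then g m else 0) C
    rw [step1, step2, step3]
    rw [sum_range_cut K C g (fun m hm => by rw [hgdef]; exact dif_neg (not_lt.mpr hm))]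
    rw [sum_range_cut C K _ (fun m hm => if_neg (not_lt.mpr hm))]
    rw [min_comm C K]
    exact Finset.sum_congr rfl fun m hm =>
      (if_pos (lt_of_lt_of_le (Finset.mem_range.mp hm) (min_le_left K C))).symm
  have final : frobSq (A * Rᵀ * R - A) = (Aᵀ * A).trace - ((Aᵀ * A) * Q).trace := by
    rw [show A * Rᵀ * R = A * Q from by rw [hQ, Matrix.mul_assoc]]
    rw [frobSq_eq_trace, expand, Matrix.trace_add, Matrix.trace_sub, Matrix.trace_sub,
      t1, t2, t3]
    ring
  rw [final, htrace, frobSq_eq_trace A]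

/-- the optimal value of the rank-`K` encoder–predictor regression problem
equals `‖Y‖_F²` minus the sum of the `K` largest eigenvalues of `ŶᵀŶ`, where
`Ŷ = X(XᵀX)⁻¹XᵀY` is the OLS prediction of `Y` from `X`. -/
theorem stmt_6 {N D C K : ℕ}
    (X : Matrix (Fin N) (Fin D) ℝ) (Y : Matrix (Fin N) (Fin C) ℝ)
    (hrank : X.rank = D) (hK1 : 1 ≤ K) (hKD : K ≤ D) :
    IsLeast
      {t : ℝ | ∃ (V : Matrix (Fin D) (Fin K) ℝ) (W : Matrix (Fin K) (Fin C) ℝ),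
        t = frobSq (X * V * W - Y)}
      (frobSq Y - sumTopEig (isHermitian_tmul (ols X Y)) K) := by
  have hdet : IsUnit (Xᵀ * X).det := isUnit_det_tmul X hrank
  set A := ols X Y with hA
  set G₀ : Matrix (Fin D) (Fin C) ℝ := (Xᵀ * X)⁻¹ * Xᵀ * Y with hG₀
  have hAX : A = X * G₀ := by
    simp only [hA, hG₀, ols, Matrix.mul_assoc]
  have hmulG : (Xᵀ * X) * G₀ = Xᵀ * Y := by
    simp only [hG₀, ← Matrix.mul_assoc]
    rw [Matrix.mul_nonsing_inv _ hdet, Matrix.one_mul]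
  have hXAY : Xᵀ * (A - Y) = 0 := by
    rw [Matrix.mul_sub, hAX, ← Matrix.mul_assoc, hmulG, sub_self]
  have hXYA : Xᵀ * (Y - A) = 0 := by
    rw [show Y - A = -(A - Y) from (neg_sub A Y).symm, Matrix.mul_neg, hXAY, neg_zero]
  have key2 : ∀ (G' : Matrix (Fin D) (Fin C) ℝ) (P : Matrix (Fin N) (Fin C) ℝ),
      Xᵀ * P = 0 → (X * G')ᵀ * P = 0 := by
    intro G' P hP
    rw [Matrix.transpose_mul, Matrix.mul_assoc, hP, Matrix.mul_zero]
  -- Pythagoras 1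
  have P1 : ∀ G : Matrix (Fin D) (Fin C) ℝ,
      frobSq (X * G - Y) = frobSq (X * G - A) + frobSq (A - Y) := by
    intro G
    have h1 : X * G - A = X * (G - G₀) := by rw [Matrix.mul_sub, ← hAX]
    have h0 : (X * G - A)ᵀ * (A - Y) = 0 := by rw [h1]; exact key2 _ _ hXAY
    have := frobSq_pyth (X * G - A) (A - Y) h0
    simpa [sub_add_sub_cancel] using this
  -- Pythagoras 2
  have P2 : frobSq Y = frobSq A + frobSq (A - Y) := by
    have h0 : Aᵀ * (Y - A) = 0 := by nth_rewrite 1 [hAX]; exact key2 _ _ hXYA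
    have hp := frobSq_pyth A (Y - A) h0
    have e : A + (Y - A) = Y := by abel
    rw [e] at hp
    rw [hp, show A - Y = -(Y - A) from (neg_sub Y A).symm, frobSq_neg]
  constructor
  · -- membership
    obtain ⟨R, hR⟩ := attainB (K := K) A
    refine ⟨G₀ * Rᵀ, R, ?_⟩
    have hXVW : X * (G₀ * Rᵀ) * R = A * Rᵀ * R := by
      rw [← Matrix.mul_assoc X G₀ Rᵀ, ← hAX]
    have h1 : A * Rᵀ * R - A = X * (G₀ * Rᵀ * R - G₀) := by
      rw [Matrix.mul_sub, ← Matrix.mul_assoc, ← Matrix.mul_assoc, ← hAX]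
    have h0 : (A * Rᵀ * R - A)ᵀ * (A - Y) = 0 := by rw [h1]; exact key2 _ _ hXAY
    rw [hXVW, show A * Rᵀ * R - Y = (A * Rᵀ * R - A) + (A - Y) from
      (sub_add_sub_cancel _ _ _).symm, frobSq_pyth _ _ h0, hR]
    linarith [P2]
  · -- lower bound
    rintro t ⟨V, W, rfl⟩
    have h1 := P1 (V * W)
    rw [← Matrix.mul_assoc] at h1
    have h2 := lowerB A (X * V) W
    rw [h1]
    linarith [P2]

end
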